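/- arXiv:1407.6956 — 2 statements merged into one kernel-verified Lean document; each statement's English description precedes it below -/
import Mathlib

section
/- For every complex number z with Im z > 0, the explicit 4×4 matrix M₄⁻¹(z, z̄) of the S³ model with z̄ = conj(z) — having rows (4i(z²+4 z z̄+z̄²)/Δ, 4i√3(z+z̄)/Δ, i(z³+11 z̄ z²+11 z̄² z+z̄³)/Δ, -2i√3 z z̄ (z+z̄)²/Δ), (4i√3(z+z̄)/Δ, 8i/Δ, 2i√3(z+z̄)²/Δ, -i(z+z̄)³/Δ), (i(z³+11 z̄ z²+11 z̄² z+z̄³)/Δ, 2i√3(z+z̄)²/Δ, 4i z z̄(z²+4 z z̄+z̄²)/Δ, -4i√3 z² z̄²(z+z̄)/Δ), (-2i√3 z z̄(z+z̄)²/Δ, -i(z+z̄)³/Δ, -4i√3 z² z̄²(z+z̄)/Δ, 8i z³ z̄³/Δ), where Δ := (z - z̄)³ — has real entries, is symmetric, and is negative definite as a real quadratic form on ℝ⁴. In particular at z = i it equals -1₄. -/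
noncomputable section

open Matrix

set_option maxHeartbeats 1600000

/-- The matrix `M₄⁻¹` of the `S³` special Kähler model. -/
def M4inv (z : ℂ) : Matrix (Fin 4) (Fin 4) ℂ :=
  let zb := starRingEnd ℂ z
  let Δ := (z - zb) ^ 3
  let s3 : ℂ := (Real.sqrt 3 : ℝ)
  let I := Complex.I
  !![4*I*(z^2 + 4*z*zb + zb^2)/Δ, 4*I*s3*(z + zb)/Δ,
       I*(z^3 + 11*zb*z^2 + 11*zb^2*z + zb^3)/Δ, -2*I*s3*z*zb*(z + zb)^2/Δ;
     4*I*s3*(z + zb)/Δ, 8*I/Δ, 2*I*s3*(z + zb)^2/Δ, -I*(z + zb)^3/Δ;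
     I*(z^3 + 11*zb*z^2 + 11*zb^2*z + zb^3)/Δ, 2*I*s3*(z + zb)^2/Δ,
       4*I*z*zb*(z^2 + 4*z*zb + zb^2)/Δ, -4*I*s3*z^2*zb^2*(z + zb)/Δ;
     -2*I*s3*z*zb*(z + zb)^2/Δ, -I*(z + zb)^3/Δ,
       -4*I*s3*z^2*zb^2*(z + zb)/Δ, 8*I*z^3*zb^3/Δ]

/-- The real form of `M4inv` for `z = x + y i`. -/
def M4r (x y : ℝ) : Matrix (Fin 4) (Fin 4) ℝ :=
  let s := Real.sqrt 3
  !![-(3*x^2+y^2)/y^3, -(s*x)/y^3, -(3*x^3+2*x*y^2)/y^3, s*x^2*(x^2+y^2)/y^3;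
     -(s*x)/y^3, -1/y^3, -(s*x^2)/y^3, x^3/y^3;
     -(3*x^3+2*x*y^2)/y^3, -(s*x^2)/y^3, -((x^2+y^2)*(3*x^2+y^2))/y^3, s*x*(x^2+y^2)^2/y^3;
     s*x^2*(x^2+y^2)/y^3, x^3/y^3, s*x*(x^2+y^2)^2/y^3, -((x^2+y^2)^3)/y^3]

lemma M4inv_eq_real (z : ℂ) (hz : 0 < z.im) :
    M4inv z = (M4r z.re z.im).map (fun t : ℝ => (t : ℂ)) := by
  set x := z.re with hx
  set y := z.im with hy'
  have hy : y ≠ 0 := ne_of_gt hz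
  have hY : (y:ℂ) ≠ 0 := by exact_mod_cast hy
  have hzeq : z = (x:ℂ) + (y:ℂ)*Complex.I := (Complex.re_add_im z).symm
  have hzb : starRingEnd ℂ z = (x:ℂ) - (y:ℂ)*Complex.I := by
    rw [hzeq]; simp only [map_add, RingHom.map_mul, Complex.conj_ofReal, Complex.conj_I]; ring
  have h2 : (Complex.I)^2 = -1 := Complex.I_sq
  have h3 : (Complex.I)^3 = -Complex.I := by rw [pow_succ, h2]; ring
  have h4 : (Complex.I)^4 = 1 := by rw [pow_succ, h3]; simp [Complex.I_mul_I]
  have h5 : (Complex.I)^5 = Complex.I := by rw [pow_succ, h4]; ring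
  have h6 : (Complex.I)^6 = -1 := by rw [pow_succ, h5, Complex.I_mul_I]
  have h7 : (Complex.I)^7 = -Complex.I := by rw [pow_succ, h6]; ring
  have h8 : (Complex.I)^8 = 1 := by rw [pow_succ, h7]; simp [Complex.I_mul_I]
  have hsub : ((x:ℂ) + y*Complex.I - ((x:ℂ) - y*Complex.I)) ≠ 0 := by
    have h : ((x:ℂ)+y*Complex.I - ((x:ℂ)-y*Complex.I)) = 2*y*Complex.I := by ring
    rw [h]; simp [hY, Complex.I_ne_zero]
  ext i j
  fin_cases i <;> fin_cases j <;>
    · simp only [M4inv, M4r, Matrix.map_apply, Matrix.cons_val', Matrix.cons_val_zero,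
        Matrix.cons_val_one, Matrix.head_cons, Matrix.empty_val', Matrix.cons_val_fin_one,
        Matrix.of_apply]
      rw [hzb, hzeq]
      push_cast
      field_simp
      ring_nf
      simp only [h2, h3, h4, h5, h6, h7, h8]
      ring

/-- for `Im z > 0` the matrix `M₄⁻¹(z,z̄)` has real entries, is
symmetric, and is negative definite as a real quadratic form on `ℝ⁴`; in
particular at `z = i` it equals `-1₄`. -/
theorem stmt_5 :
    (∀ z : ℂ, 0 < z.im →
      (∀ i j, (M4inv z i j).im = 0) ∧
      (M4inv z)ᵀ = M4inv z ∧
      (∀ x : Fin 4 → ℝ, x ≠ 0 → ∑ i, ∑ j, x i * (M4inv z i j).re * x j < 0)) ∧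
    M4inv Complex.I = -1 := by
  constructor
  · intro z hz
    have hM := M4inv_eq_real z hz
    refine ⟨?_, ?_, ?_⟩
    · intro i j; rw [hM]; simp [Matrix.map_apply]
    · ext i j
      fin_cases i <;> fin_cases j <;> simp [M4inv, Matrix.transpose_apply]
    · intro v hv
      set x := z.re with hx
      set y := z.im with hy'
      have hy : (0:ℝ) < y := hz
      have hy3 : (0:ℝ) < y^3 := by positivity
      set s := Real.sqrt 3 with hs
      have hs2 : s^2 = 3 := Real.sq_sqrt (by norm_num)
      set a := v 0 with ha'
      set b := v 1 with hb'
      set c := v 2 with hc'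
      set d := v 3 with hd'
      have hNQ : (3*x^2+y^2)*a^2 + 2*(s*x)*a*b + 2*(3*x^3+2*x*y^2)*a*c
            - 2*(s*x^2*(x^2+y^2))*a*d + b^2 + 2*(s*x^2)*b*c - 2*(x^3)*b*d
            + ((x^2+y^2)*(3*x^2+y^2))*c^2 - 2*(s*x*(x^2+y^2)^2)*c*d + ((x^2+y^2)^3)*d^2 =
          (y^3*d)^2 + (y^2*(c - s*x*d))^2 + (y*(a + 2*c*x - s*x^2*d))^2
            + (s*a*x + b + s*c*x^2 - d*x^3)^2 := by
        linear_combination (-(x^2*y^4*d^2 + x^4*y^2*d^2 + x^2*a^2 + 2*x^3*a*c + x^4*c^2)) * hs2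
      have key : ∑ i, ∑ j, v i * (M4inv z i j).re * v j =
          -(((y^3*d)^2 + (y^2*(c - s*x*d))^2 + (y*(a + 2*c*x - s*x^2*d))^2
              + (s*a*x + b + s*c*x^2 - d*x^3)^2)) / y^3 := by
        rw [← hNQ]
        simp only [hM, Matrix.map_apply, Complex.ofReal_re, Fin.sum_univ_four, M4r,
          Matrix.cons_val', Matrix.cons_val_zero, Matrix.cons_val_one, Matrix.head_cons,
          Matrix.cons_val_two, Matrix.cons_val_three, Matrix.tail_cons,
          Matrix.empty_val', Matrix.cons_val_fin_one, Matrix.of_apply, Matrix.head_fin_const]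
        simp only [← ha', ← hb', ← hc', ← hd']
        ring
      rw [key]
      apply div_neg_of_neg_of_pos _ hy3
      rw [neg_lt_zero]
      have hQ1 := sq_nonneg (y^3*d)
      have hQ2 := sq_nonneg (y^2*(c - s*x*d))
      have hQ3 := sq_nonneg (y*(a + 2*c*x - s*x^2*d))
      have hQ4 := sq_nonneg (s*a*x + b + s*c*x^2 - d*x^3)
      by_cases hd : d = 0
      · by_cases hc : c = 0
        · by_cases ha : a = 0
          · have hb : b ≠ 0 := by
              intro hb1
              exact hv (funext fun i => by
                fin_cases i <;> first | exact ha | exact hb1 | exact hc | exact hd)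
            have ht : s*a*x + b + s*c*x^2 - d*x^3 ≠ 0 := by
              rw [ha, hc, hd]; simpa using hb
            have h4' : 0 < (s*a*x + b + s*c*x^2 - d*x^3)^2 :=
              lt_of_le_of_ne (sq_nonneg _) (Ne.symm (pow_ne_zero 2 ht))
            linarith
          · have ht : y*(a + 2*c*x - s*x^2*d) ≠ 0 := by
              rw [hc, hd]; simpa using mul_ne_zero (ne_of_gt hy) ha
            have h3' : 0 < (y*(a + 2*c*x - s*x^2*d))^2 :=
              lt_of_le_of_ne (sq_nonneg _) (Ne.symm (pow_ne_zero 2 ht))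
            linarith
        · have ht : y^2*(c - s*x*d) ≠ 0 := by
            rw [hd]; simpa using mul_ne_zero (pow_ne_zero 2 (ne_of_gt hy)) hc
          have h2' : 0 < (y^2*(c - s*x*d))^2 :=
            lt_of_le_of_ne (sq_nonneg _) (Ne.symm (pow_ne_zero 2 ht))
          linarith
      · have ht : y^3*d ≠ 0 := mul_ne_zero (ne_of_gt hy3) hd
        have h1' : 0 < (y^3*d)^2 :=
          lt_of_le_of_ne (sq_nonneg _) (Ne.symm (pow_ne_zero 2 ht))
        linarith
  · have h2 : (Complex.I)^2 = -1 := Complex.I_sq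
    have h3 : (Complex.I)^3 = -Complex.I := by rw [pow_succ, h2]; ring
    have h4 : (Complex.I)^4 = 1 := by rw [pow_succ, h3]; simp [Complex.I_mul_I]
    have h5 : (Complex.I)^5 = Complex.I := by rw [pow_succ, h4]; ring
    have h6 : (Complex.I)^6 = -1 := by rw [pow_succ, h5, Complex.I_mul_I]
    have h7 : (Complex.I)^7 = -Complex.I := by rw [pow_succ, h6]; ring
    have h8 : (Complex.I)^8 = 1 := by rw [pow_succ, h7]; simp [Complex.I_mul_I]
    have hsub : (Complex.I - -Complex.I) ≠ 0 := by
      have h : Complex.I - -Complex.I = 2*Complex.I := by ring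
      rw [h]; exact mul_ne_zero two_ne_zero Complex.I_ne_zero
    have hone : (-1 : Matrix (Fin 4) (Fin 4) ℂ) =
        !![-1,0,0,0; 0,-1,0,0; 0,0,-1,0; 0,0,0,-1] := by
      ext i j
      fin_cases i <;> fin_cases j <;>
        norm_num [Matrix.one_apply, Fin.ext_iff]
    rw [hone]
    ext i j
    fin_cases i <;> fin_cases j <;>
      · simp only [M4inv, Complex.conj_I, Matrix.cons_val', Matrix.cons_val_zero,
          Matrix.cons_val_one, Matrix.cons_val_two, Matrix.cons_val_three, Matrix.head_cons,
          Matrix.tail_cons, Matrix.head_fin_const, Matrix.empty_val', Matrix.cons_val_fin_one,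
          Matrix.of_apply]
        try field_simp
        try ring_nf
        try simp only [h2, h3, h4, h5, h6, h7, h8]
        try norm_num
        try ring
end
end

section
/- For every complex number w, the substitution z₁ = (3/16)·w⁵, z₂ = (3√5/16)·w⁴, z₃ = (√10/8)·w³, z₄ = w³, z₅ = (3√2/4)·w², z₆ = (3/2)·w satisfies the four holomorphic constraints defining the vanishing of the (j = 3/2) component inside the 14'-representation for the nilpotent orbit 𝔒₁ of sp(6,ℝ): (i) √5·(z₄z₆ - z₅²) - 2z₂ = 0; (ii) 8z₃ - √10·z₄ = 0; (iii) √5·z₁ + 2z₃z₅ - 2z₂z₆ = 0; (iv) -√10·z₃² + 8·z₃z₄ - 8·z₂z₅ + √10·z₁z₆ = 0. -/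
noncomputable section

/-- the holomorphic curve `w ↦ (z₁,…,z₆)` associated with the
nilpotent orbit `𝔒₁` of `sp(6,ℝ)` satisfies the four holomorphic constraints
expressing the vanishing of the `(j = 3/2)` component inside the
`14'`-representation. -/
theorem stmt_18 (w : ℂ) :
    let z1 : ℂ := (3 / 16) * w ^ 5
    let z2 : ℂ := (3 * (Real.sqrt 5 : ℂ) / 16) * w ^ 4
    let z3 : ℂ := ((Real.sqrt 10 : ℂ) / 8) * w ^ 3
    let z4 : ℂ := w ^ 3
    let z5 : ℂ := (3 * (Real.sqrt 2 : ℂ) / 4) * w ^ 2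
    let z6 : ℂ := (3 / 2) * w
    (Real.sqrt 5 : ℂ) * (z4 * z6 - z5 ^ 2) - 2 * z2 = 0 ∧
    8 * z3 - (Real.sqrt 10 : ℂ) * z4 = 0 ∧
    (Real.sqrt 5 : ℂ) * z1 + 2 * z3 * z5 - 2 * z2 * z6 = 0 ∧
    -(Real.sqrt 10 : ℂ) * z3 ^ 2 + 8 * z3 * z4 - 8 * z2 * z5 +
      (Real.sqrt 10 : ℂ) * z1 * z6 = 0 := by

  have h2 : ((Real.sqrt 2 : ℝ) : ℂ) ^ 2 = 2 := by
    norm_cast; rw [Real.sq_sqrt] <;> norm_num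
  have h5 : ((Real.sqrt 5 : ℝ) : ℂ) ^ 2 = 5 := by
    norm_cast; rw [Real.sq_sqrt] <;> norm_num
  have h10 : ((Real.sqrt 10 : ℝ) : ℂ) = (Real.sqrt 5 : ℂ) * (Real.sqrt 2 : ℂ) := by
    norm_cast
    rw [← Real.sqrt_mul (by norm_num : (0:ℝ) ≤ 5)]
    norm_num
  simp only [h10]
  refine ⟨?_, by ring, ?_, ?_⟩
  · linear_combination (-(9:ℂ)/16) * (Real.sqrt 5 : ℂ) * w^4 * h2
  · linear_combination (3/16) * (Real.sqrt 5 : ℂ) * w^5 * h2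
  · linear_combination (-(w^6 * (Real.sqrt 5 : ℂ) * (Real.sqrt 2 : ℂ) * ((Real.sqrt 2 : ℂ))^2)/64) * h5
      + (-(w^6 * (Real.sqrt 5 : ℂ) * (Real.sqrt 2 : ℂ) * 5)/64) * h2


end
end
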